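/- Let u(x_1,…,x_n) = x_1² + ⋯ + x_n² on ℝ^n. Then the Hessian of u satisfies ‖Hess u‖² ≤ 4n(1 + |grad u|²) everywhere, the first and second symmetric curvature functions S_1, S_2 of the graph of u are everywhere positive, but |grad u − V| is not Lebesgue integrable on ℝ^n for any constant V ∈ ℝ^n. -/

import Mathlib

open MeasureTheory

section Aux

lemma aux_MM {n : ℕ} (g : Fin n → ℝ) :
    Matrix.vecMulVec g g * Matrix.vecMulVec g g = (∑ i, g i ^ 2) • Matrix.vecMulVec g g := by
  ext i j
  simp [Matrix.mul_apply, Matrix.vecMulVec_apply, Finset.sum_mul, Finset.mul_sum]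
  congr 1; funext k; ring

lemma aux_trM {n : ℕ} (g : Fin n → ℝ) :
    (Matrix.vecMulVec g g).trace = ∑ i, g i ^ 2 := by
  simp [Matrix.trace, Matrix.diag, Matrix.vecMulVec_apply, ← sq]

lemma aux_inv_one_add {n : ℕ} (g : Fin n → ℝ) :
    (1 + Matrix.vecMulVec g g)⁻¹
      = 1 - ((1 + ∑ i, g i ^ 2)⁻¹) • Matrix.vecMulVec g g := by
  set c := ∑ i, g i ^ 2 with hc
  have hc0 : 0 ≤ c := Finset.sum_nonneg fun i _ => sq_nonneg _
  have h1c : (1 + c) ≠ 0 := by positivity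
  apply Matrix.inv_eq_right_inv
  rw [mul_sub, mul_one, Matrix.mul_smul, add_mul, one_mul, aux_MM, ← hc, smul_add, smul_smul]
  have key : (1+c)⁻¹ • Matrix.vecMulVec g g + ((1+c)⁻¹ * c) • Matrix.vecMulVec g g
      = Matrix.vecMulVec g g := by
    rw [← add_smul, show (1+c)⁻¹ + (1+c)⁻¹ * c = 1 by field_simp]
    simp
  rw [key, add_sub_cancel_right]

lemma aux_trace_inv {n : ℕ} (g : Fin n → ℝ) :
    ((1 + Matrix.vecMulVec g g)⁻¹ : Matrix (Fin n) (Fin n) ℝ).trace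
      = n - (1 + ∑ i, g i ^ 2)⁻¹ * (∑ i, g i ^ 2) := by
  rw [aux_inv_one_add, Matrix.trace_sub, Matrix.trace_smul, aux_trM, Matrix.trace_one, smul_eq_mul]
  simp

lemma aux_trace_inv_sq {n : ℕ} (g : Fin n → ℝ) :
    (((1 + Matrix.vecMulVec g g)⁻¹ * (1 + Matrix.vecMulVec g g)⁻¹ :
        Matrix (Fin n) (Fin n) ℝ)).trace
      = n - 2 * ((1 + ∑ i, g i ^ 2)⁻¹ * (∑ i, g i ^ 2))
        + ((1 + ∑ i, g i ^ 2)⁻¹ * (∑ i, g i ^ 2))^2 := by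
  set c := ∑ i, g i ^ 2 with hc
  set k := (1 + c)⁻¹ with hk
  rw [aux_inv_one_add, ← hc, ← hk]
  have expand : ((1 : Matrix (Fin n) (Fin n) ℝ) - k • Matrix.vecMulVec g g)
      * (1 - k • Matrix.vecMulVec g g)
      = 1 - k • Matrix.vecMulVec g g
        - (k • Matrix.vecMulVec g g - (k*(k*c)) • Matrix.vecMulVec g g) := by
    rw [sub_mul, one_mul, mul_sub, mul_one, Matrix.smul_mul, Matrix.mul_smul, aux_MM, ← hc,
      smul_smul, smul_smul, mul_assoc]
  rw [expand]
  simp only [Matrix.trace_sub, Matrix.trace_smul, Matrix.trace_one, aux_trM, ← hc, smul_eq_mul,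
    Fintype.card_fin]
  ring

variable {E : Type*} [NormedAddCommGroup E] [InnerProductSpace ℝ E]

lemma aux_hasFDerivAt_innerSelf (p : E) :
    HasFDerivAt (fun x : E => (inner ℝ x x : ℝ)) ((2:ℝ) • (innerSL ℝ p)) p := by
  have h := (hasFDerivAt_id p).inner ℝ (hasFDerivAt_id p)
  refine h.congr_fderiv ?_
  ext v
  simp [real_inner_comm]
  ring

lemma aux_gradient_innerSelf [CompleteSpace E] (p : E) :
    gradient (fun x : E => (inner ℝ x x : ℝ)) p = (2:ℝ) • p := by
  refine HasGradientAt.gradient ?_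
  rw [hasGradientAt_iff_hasFDerivAt]
  convert aux_hasFDerivAt_innerSelf p using 1
  ext v
  simp [InnerProductSpace.toDual_apply_apply, real_inner_smul_left]
  ext v
  simp [InnerProductSpace.toDual_apply_apply, real_inner_smul_left, innerSL_apply_apply]

lemma aux_iteratedFDeriv_innerSelf (p v w : E) :
    iteratedFDeriv ℝ 2 (fun x : E => (inner ℝ x x : ℝ)) p ![v, w] = 2 * (inner ℝ v w : ℝ) := by
  rw [iteratedFDeriv_two_apply]
  have hf : fderiv ℝ (fun x : E => (inner ℝ x x : ℝ)) = fun q => (2:ℝ) • (innerSL ℝ q) := by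
    funext q; exact (aux_hasFDerivAt_innerSelf q).fderiv
  rw [hf]
  have h2 : HasFDerivAt (fun q : E => (2:ℝ) • (innerSL ℝ q))
      ((2:ℝ) • (innerSL ℝ (E := E))) p := ((innerSL ℝ (E := E)).hasFDerivAt).const_smul (2:ℝ)
  rw [h2.fderiv]
  simp [real_inner_comm, innerSL_apply_apply]
  rfl

end Aux

/-- For `u(x) = x₁² + ⋯ + xₙ²` on `ℝⁿ` (`n ≥ 2`): the Hessian satisfies
`‖Hess u‖² ≤ 4n(1 + |grad u|²)`, the symmetric curvature functions `S₁, S₂` of the graph of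
`u` (computed from the shape operator `B = (1/W)(I + ∇u ∇uᵀ)⁻¹ Hess u` in graph coordinates)
are everywhere positive, but `|grad u - V|` is not Lebesgue integrable for any constant `V`. -/
theorem stmt_13 {n : ℕ} (hn : 2 ≤ n)
    (u : EuclideanSpace ℝ (Fin n) → ℝ) (hu : ∀ p, u p = ∑ i, (p i) ^ 2)
    (Hm : EuclideanSpace ℝ (Fin n) → Matrix (Fin n) (Fin n) ℝ)
    (hHm : ∀ p i j, Hm p i j =
      iteratedFDeriv ℝ 2 u p ![EuclideanSpace.single i 1, EuclideanSpace.single j 1])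
    (W : EuclideanSpace ℝ (Fin n) → ℝ)
    (hW : ∀ p, W p = Real.sqrt (1 + ‖gradient u p‖ ^ 2))
    (G : EuclideanSpace ℝ (Fin n) → Matrix (Fin n) (Fin n) ℝ)
    (hG : ∀ p, G p = 1 + Matrix.vecMulVec (fun i => gradient u p i) (fun i => gradient u p i))
    (B : EuclideanSpace ℝ (Fin n) → Matrix (Fin n) (Fin n) ℝ)
    (hB : ∀ p, B p = (W p)⁻¹ • ((G p)⁻¹ * Hm p))
    (S1 S2 : EuclideanSpace ℝ (Fin n) → ℝ)
    (hS1 : ∀ p, S1 p = (B p).trace)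
    (hS2 : ∀ p, S2 p = ((B p).trace ^ 2 - (B p * B p).trace) / 2) :
    (∀ p, ∑ i, ∑ j, (Hm p i j) ^ 2 ≤ 4 * n * (1 + ‖gradient u p‖ ^ 2)) ∧
      (∀ p, 0 < S1 p) ∧ (∀ p, 0 < S2 p) ∧
      (∀ V : EuclideanSpace ℝ (Fin n),
        ¬ Integrable (fun p => ‖gradient u p - V‖) volume) := by
  -- u is the squared norm, i.e. ⟪x,x⟫
  have hu' : u = fun x => (inner ℝ x x : ℝ) := by
    funext x
    rw [hu]
    simp only [PiLp.inner_apply, RCLike.inner_apply, conj_trivial, sq]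
  -- the gradient is 2x
  have hgrad : ∀ p, gradient u p = (2:ℝ) • p := by
    intro p; rw [hu']; exact aux_gradient_innerSelf p
  -- the Hessian matrix is 2•1
  have hHm2 : ∀ p, Hm p = (2:ℝ) • (1 : Matrix (Fin n) (Fin n) ℝ) := by
    intro p
    ext i j
    rw [hHm, hu', aux_iteratedFDeriv_innerSelf]
    simp only [EuclideanSpace.inner_single_left, EuclideanSpace.single_apply, Matrix.one_apply,
      Matrix.smul_apply, smul_eq_mul, map_one, one_mul, eq_comm]
  -- squared norms in EuclideanSpace
  have hnorm : ∀ v : EuclideanSpace ℝ (Fin n), ‖v‖ ^ 2 = ∑ i, (v i) ^ 2 := by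
    intro v
    rw [EuclideanSpace.norm_eq, Real.sq_sqrt (by positivity)]
    simp [sq_abs]
  refine ⟨?_, ?_, ?_, ?_⟩
  · intro p
    have hrow : ∀ i : Fin n, ∑ j, (Hm p i j) ^ 2 = 4 := by
      intro i
      have : ∀ j, (Hm p i j) ^ 2 = if i = j then (4:ℝ) else 0 := by
        intro j
        rw [hHm2]
        simp only [Matrix.smul_apply, Matrix.one_apply, smul_eq_mul]
        split_ifs <;> norm_num
      simp [this]
    have : ∑ i, ∑ j, (Hm p i j) ^ 2 = 4 * n := by
      simp [hrow, mul_comm]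
    rw [this]
    have h1 : (0:ℝ) ≤ ‖gradient u p‖ ^ 2 := by positivity
    nlinarith [show (0:ℝ) ≤ 4 * n by positivity]
  · intro p
    set g : Fin n → ℝ := fun i => gradient u p i with hg
    set c : ℝ := ∑ i, g i ^ 2 with hc
    have hc0 : 0 ≤ c := Finset.sum_nonneg fun i _ => sq_nonneg _
    have hcn : ‖gradient u p‖ ^ 2 = c := hnorm _
    have hWp : W p = Real.sqrt (1 + c) := by rw [hW, hcn]
    have hW0 : 0 < W p := by rw [hWp]; positivity
    have htr : (G p)⁻¹.trace = n - (1+c)⁻¹ * c := by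
      rw [hG]; exact aux_trace_inv g
    have hBtr : (B p).trace = (W p)⁻¹ * (2 * (n - (1+c)⁻¹ * c)) := by
      rw [hB, hHm2, Matrix.trace_smul, Matrix.mul_smul, mul_one, Matrix.trace_smul, htr,
        smul_eq_mul, smul_eq_mul]
    have hkc : (1+c)⁻¹ * c < 1 := by
      rw [inv_mul_lt_iff₀ (by positivity)]
      linarith
    rw [hS1, hBtr]
    have h2 : (2:ℝ) ≤ n := by exact_mod_cast hn
    have : (0:ℝ) < n - (1+c)⁻¹ * c := by linarith
    positivity
  · intro p
    set g : Fin n → ℝ := fun i => gradient u p i with hg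
    set c : ℝ := ∑ i, g i ^ 2 with hc
    have hc0 : 0 ≤ c := Finset.sum_nonneg fun i _ => sq_nonneg _
    have hcn : ‖gradient u p‖ ^ 2 = c := hnorm _
    have hWp : W p = Real.sqrt (1 + c) := by rw [hW, hcn]
    have hW0 : 0 < W p := by rw [hWp]; positivity
    set t : ℝ := (1+c)⁻¹ * c with ht
    have hkc : t < 1 := by
      rw [ht, inv_mul_lt_iff₀ (by positivity)]
      linarith
    have ht0 : 0 ≤ t := by positivity
    have hBp : B p = ((W p)⁻¹ * 2) • (G p)⁻¹ := by
      rw [hB, hHm2, Matrix.mul_smul, mul_one, smul_smul]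
    have hBtr : (B p).trace = (W p)⁻¹ * (2 * ((n:ℝ) - t)) := by
      rw [hBp, Matrix.trace_smul, hG, aux_trace_inv g, smul_eq_mul, ← hc, ← ht]
      ring
    have hBsq : (B p * B p).trace = (W p)⁻¹^2 * (4 * ((n:ℝ) - 2*t + t^2)) := by
      rw [hBp, smul_mul_smul_comm, Matrix.trace_smul, hG, aux_trace_inv_sq g,
        smul_eq_mul, ← hc, ← ht]
      ring
    rw [hS2, hBtr, hBsq]
    have h2 : (2:ℝ) ≤ n := by exact_mod_cast hn
    have hWinv : 0 < (W p)⁻¹ := by positivity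
    have key : ((W p)⁻¹ * (2 * (n - t)))^2 - (W p)⁻¹^2 * (4 * (n - 2*t + t^2))
        = (W p)⁻¹^2 * (4 * ((n:ℝ) - 1) * ((n:ℝ) - 2*t)) := by ring
    rw [key]
    have : (0:ℝ) < (n:ℝ) - 2*t := by linarith
    have : (0:ℝ) < (n:ℝ) - 1 := by linarith
    positivity
  · intro V hint
    have hint' : Integrable (fun p : EuclideanSpace ℝ (Fin n) => ‖(2:ℝ) • p - V‖) volume := by
      refine hint.congr (Filter.Eventually.of_forall fun p => ?_)
      simp only [hgrad]
    haveI : Nonempty (Fin n) := ⟨⟨0, by omega⟩⟩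
    have hA := hint'.measure_ge_lt_top (ε := 1) one_pos
    set A := {x : EuclideanSpace ℝ (Fin n) | 1 ≤ ‖(2:ℝ) • x - V‖} with hAdef
    have hAc : Aᶜ ⊆ Metric.closedBall 0 ((1 + ‖V‖)/2) := by
      intro x hx
      simp only [hAdef, Set.mem_compl_iff, Set.mem_setOf_eq, not_le] at hx
      have h1 : ‖(2:ℝ) • x‖ ≤ ‖(2:ℝ) • x - V‖ + ‖V‖ := by
        calc ‖(2:ℝ) • x‖ = ‖((2:ℝ) • x - V) + V‖ := by rw [sub_add_cancel]
          _ ≤ _ := norm_add_le _ _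
      have h2 : ‖(2:ℝ) • x‖ = 2 * ‖x‖ := by
        rw [norm_smul]; simp
      simp only [Metric.mem_closedBall, dist_zero_right]
      nlinarith
    have hAcm : volume Aᶜ < ⊤ :=
      lt_of_le_of_lt (measure_mono hAc) (measure_closedBall_lt_top)
    have huniv : volume (Set.univ : Set (EuclideanSpace ℝ (Fin n))) = ⊤ :=
      measure_univ_of_isAddLeftInvariant volume
    have : volume (Set.univ : Set (EuclideanSpace ℝ (Fin n))) ≤ volume A + volume Aᶜ := by
      rw [← Set.union_compl_self A]
      exact measure_union_le _ _
    rw [huniv] at this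
    exact absurd this (by
      simp only [top_le_iff]
      exact fun h => absurd h (ne_of_lt (ENNReal.add_lt_top.2 ⟨hA, hAcm⟩)))
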